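/- For t ≥ 1 and δ ∈ (0,1), choosing i = ⌈log₂ t⌉ in the family of bounds min_i (√(t/2^i) + √(2^i/t)) · √(log(i(i+1)/δ)/(2t)) yields min_i (√(t/2^i) + √(2^i/t)) · √(log(i(i+1)/δ)/(2t)) ≤ √((9/(4t)) · log((log₂(4t))²/δ)). -/

import Mathlib

open Real

lemma key_bound (t : ℕ) (ht : 1 ≤ t) (δ : ℝ) (hδ0 : 0 < δ) (hδ1 : δ < 1)
    (i : ℕ) (hi : 1 ≤ i) (h1 : (t : ℝ) ≤ 2 ^ i) (h2 : (2 : ℝ) ^ i ≤ 2 * t) :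
    (Real.sqrt ((t : ℝ) / 2 ^ i) + Real.sqrt ((2 : ℝ) ^ i / t)) *
        Real.sqrt (Real.log ((i : ℝ) * (i + 1) / δ) / (2 * t)) ≤
      Real.sqrt ((9 / (4 * t)) * Real.log ((Real.logb 2 (4 * t)) ^ 2 / δ)) := by
  have ht0 : (0 : ℝ) < t := by exact_mod_cast ht
  have h2i : (0 : ℝ) < 2 ^ i := by positivity
  set L := Real.logb 2 (4 * (t : ℝ)) with hL
  have hiL : (i : ℝ) + 1 ≤ L := by
    have h : ((i : ℝ) + 1) = Real.logb 2 ((2 : ℝ) ^ (i + 1)) := by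
      rw [Real.logb_pow, Real.logb_self_eq_one (by norm_num)]
      push_cast; ring
    rw [h, hL]
    exact Real.logb_le_logb_of_le (by norm_num) (by positivity) (by rw [pow_succ]; linarith)
  have hiL' : (i : ℝ) ≤ L := by
    have : (0:ℝ) ≤ i := by positivity
    linarith
  have hprod : (i : ℝ) * (i + 1) ≤ L ^ 2 := by
    have h0 : (0:ℝ) ≤ i := by positivity
    nlinarith
  have hii1 : (2 : ℝ) ≤ (i : ℝ) * (i + 1) := by
    have : (1 : ℝ) ≤ i := by exact_mod_cast hi
    nlinarith
  have hlogmono : Real.log ((i : ℝ) * (i + 1) / δ) ≤ Real.log (L ^ 2 / δ) := by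
    apply Real.log_le_log (by positivity)
    gcongr
  have hlognn : 0 ≤ Real.log ((i : ℝ) * (i + 1) / δ) := by
    apply Real.log_nonneg
    rw [le_div_iff₀ hδ0]; linarith
  have hX : 0 ≤ Real.log (L ^ 2 / δ) := le_trans hlognn hlogmono
  -- bound on the sqrt sum
  set a := Real.sqrt ((t : ℝ) / 2 ^ i) with ha
  set c := Real.sqrt ((2 : ℝ) ^ i / t) with hc
  have hac : a * c = 1 := by
    rw [ha, hc, ← Real.sqrt_mul (by positivity)]
    rw [div_mul_div_comm]
    rw [show (t : ℝ) * 2 ^ i / (2 ^ i * t) = 1 by field_simp]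
    exact Real.sqrt_one
  have hc1 : 1 ≤ c := by
    rw [hc, show (1:ℝ) = Real.sqrt 1 from Real.sqrt_one.symm]
    apply Real.sqrt_le_sqrt
    rw [le_div_iff₀ ht0]; linarith
  have hcs : c ≤ Real.sqrt 2 := by
    rw [hc]
    apply Real.sqrt_le_sqrt
    rw [div_le_iff₀ ht0]; linarith
  have hs2 : (Real.sqrt 2) ^ 2 = 2 := Real.sq_sqrt (by norm_num)
  have hs2pos : (0:ℝ) < Real.sqrt 2 := by positivity
  have hsum : a + c ≤ 3 / Real.sqrt 2 := by
    rw [le_div_iff₀ hs2pos]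
    nlinarith [mul_nonneg (sub_nonneg.mpr hcs) (by nlinarith : (0:ℝ) ≤ Real.sqrt 2 * c - 1)]
  have hanneg : 0 ≤ a := Real.sqrt_nonneg _
  -- combine
  have step1 : (a + c) * Real.sqrt (Real.log ((i : ℝ) * (i + 1) / δ) / (2 * t)) ≤
      (3 / Real.sqrt 2) * Real.sqrt (Real.log (L ^ 2 / δ) / (2 * t)) := by
    apply mul_le_mul hsum _ (Real.sqrt_nonneg _) (by positivity)
    apply Real.sqrt_le_sqrt
    gcongr
  refine step1.trans (le_of_eq ?_)
  have h32 : (3 : ℝ) / Real.sqrt 2 = Real.sqrt (9 / 2) := by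
    rw [show (9:ℝ)/2 = 3^2 / (Real.sqrt 2)^2 by rw [hs2]; norm_num, ← div_pow,
      Real.sqrt_sq (by positivity)]
  rw [h32, ← Real.sqrt_mul (by norm_num)]
  congr 1
  ring
theorem stitched_bound_optimization
    (t : ℕ) (ht : 1 ≤ t) (δ : ℝ) (hδ0 : 0 < δ) (hδ1 : δ < 1)
    (b : ℕ → ℝ)
    (hb : ∀ i : ℕ, b i =
      (Real.sqrt ((t : ℝ) / 2 ^ i) + Real.sqrt ((2 : ℝ) ^ i / t)) *
        Real.sqrt (Real.log ((i : ℝ) * (i + 1) / δ) / (2 * t))) :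
    b (Nat.clog 2 t) ≤ Real.sqrt ((9 / (4 * t)) * Real.log ((Real.logb 2 (4 * t)) ^ 2 / δ)) ∧
    (⨅ i : ℕ, b (i + 1)) ≤
      Real.sqrt ((9 / (4 * t)) * Real.log ((Real.logb 2 (4 * t)) ^ 2 / δ)) := by
  have ht0 : (0 : ℝ) < t := by exact_mod_cast ht
  have hbdd : BddBelow (Set.range fun i : ℕ => b (i + 1)) := by
    refine ⟨0, ?_⟩
    rintro x ⟨i, rfl⟩
    dsimp only
    rw [hb]
    positivity
  rcases eq_or_lt_of_le ht with h1 | h2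
  · -- t = 1
    subst h1
    constructor
    · have : Nat.clog 2 1 = 0 := by simp
      rw [this, hb]
      have : ((0 : ℕ) : ℝ) * ((0 : ℕ) + 1) / δ = 0 := by
        push_cast; ring
      rw [this, Real.log_zero]
      simp [Real.sqrt_nonneg]
    · refine le_trans (ciInf_le hbdd 0) ?_
      have hm := key_bound 1 le_rfl δ hδ0 hδ1 1 le_rfl (by norm_num) (by norm_num)
      rw [← hb] at hm
      exact hm
  · -- 2 ≤ t
    have ht2 : 2 ≤ t := h2
    have hclog : 1 ≤ Nat.clog 2 t := Nat.clog_pos (by norm_num) ht2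
    have hle : (t : ℝ) ≤ 2 ^ Nat.clog 2 t := by
      exact_mod_cast Nat.le_pow_clog (by norm_num) t
    have e : Nat.clog 2 t - 1 + 1 = Nat.clog 2 t := by omega
    have hge : (2 : ℝ) ^ Nat.clog 2 t ≤ 2 * t := by
      have h := Nat.pow_pred_clog_lt_self (b := 2) (by norm_num) ht2
      have hn : 2 ^ Nat.clog 2 t ≤ 2 * t := by
        calc 2 ^ Nat.clog 2 t = 2 ^ (Nat.clog 2 t - 1) * 2 := by rw [← pow_succ, e]
          _ ≤ t * 2 := Nat.mul_le_mul_right _ (le_of_lt h)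
          _ = 2 * t := by ring
      exact_mod_cast hn
    have hmain := key_bound t ht δ hδ0 hδ1 (Nat.clog 2 t) hclog hle hge
    rw [← hb] at hmain
    refine ⟨hmain, ?_⟩
    refine le_trans (ciInf_le hbdd (Nat.clog 2 t - 1)) ?_
    rw [e]
    exact hmain
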